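/- Let I ⊆ [n] be strongly connected. Then the numerator N_I = Σ_{acyclic f : I → [n]} ∏_{i ∈ I} X̃_{f(i)} of Y_I is an irreducible element of the polynomial ring ℤ[A_1,…,A_n, X_1,…,X_n]. Moreover, for distinct strongly connected subsets I ≠ J of [n], the numerators N_I and N_J are coprime (they have no common non-unit factor). -/

import Mathlib

open MvPolynomial

/-- Reachability inside a subset `U` of vertices, along edges of `E`. -/
def ReachIn {n : ℕ} (E : Fin n → Fin n → Prop) (U : Finset (Fin n)) (a b : Fin n) : Prop :=
  Relation.ReflTransGen (fun x y => E x y ∧ x ∈ U ∧ y ∈ U) a b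

/-- A nonempty subset `I` is strongly connected if any vertex of `I` can reach any
other vertex of `I` by a directed path staying inside `I`. -/
def StronglyConnected {n : ℕ} (E : Fin n → Fin n → Prop) (I : Finset (Fin n)) : Prop :=
  I.Nonempty ∧ ∀ a ∈ I, ∀ b ∈ I, ReachIn E I a b

open Classical in
/-- The strongly connected component of `x` in the induced subgraph on `U`. -/
noncomputable def scc {n : ℕ} (E : Fin n → Fin n → Prop) (U : Finset (Fin n)) (x : Fin n) :
    Finset (Fin n) :=
  U.filter fun y => ReachIn E U x y ∧ ReachIn E U y x

/-- `S ⊕ j` : the strongly connected component of `S ∪ {j}` containing `j`. -/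
noncomputable def oplus {n : ℕ} (E : Fin n → Fin n → Prop) (S : Finset (Fin n)) (j : Fin n) :
    Finset (Fin n) :=
  scc E (insert j S) j

/-- `S ⊖ j = (S ∪ {j}) − (S ⊕ j)`. -/
noncomputable def ominus {n : ℕ} (E : Fin n → Fin n → Prop) (S : Finset (Fin n)) (j : Fin n) :
    Finset (Fin n) :=
  insert j S \ oplus E S j

/-- A family of strongly connected subsets is nested if any two members are nested or
disjoint, and any tuple of pairwise disjoint members are exactly the strongly connected
components of their union. -/
def Nested {n : ℕ} (E : Fin n → Fin n → Prop) (𝒮 : Finset (Finset (Fin n))) : Prop :=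
  (∀ I ∈ 𝒮, StronglyConnected E I) ∧
  (∀ I ∈ 𝒮, ∀ J ∈ 𝒮, I ⊆ J ∨ J ⊆ I ∨ Disjoint I J) ∧
  (∀ 𝒯 ⊆ 𝒮, (∀ I ∈ 𝒯, ∀ J ∈ 𝒯, I ≠ J → Disjoint I J) →
    ∀ I ∈ 𝒯, ∀ x ∈ I, scc E (𝒯.sup id) x = I)

/-- The support of a collection: the union of its members. -/
def nsupport {n : ℕ} (𝒮 : Finset (Finset (Fin n))) : Finset (Fin n) := 𝒮.sup id

/-- A nested collection is maximal (for its support) if the only nested collection with the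
same support containing it is itself. -/
def MaximalNested {n : ℕ} (E : Fin n → Fin n → Prop) (𝒮 : Finset (Finset (Fin n))) : Prop :=
  Nested E 𝒮 ∧ ∀ 𝒮' : Finset (Finset (Fin n)),
    Nested E 𝒮' → nsupport 𝒮' = nsupport 𝒮 → 𝒮 ⊆ 𝒮' → 𝒮' = 𝒮

/-- The ambient field: rational functions in the indeterminates `A_1,…,A_n,X_1,…,X_n`. -/
abbrev Kn (n : ℕ) : Type := FractionRing (MvPolynomial (Fin n ⊕ Fin n) ℤ)

/-- The coefficient `A_i`, as an element of the ambient field. -/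
noncomputable def AA {n : ℕ} (i : Fin n) : Kn n :=
  algebraMap (MvPolynomial (Fin n ⊕ Fin n) ℤ) (Kn n) (X (Sum.inl i))

/-- The initial cluster variable `X_i`, as an element of the ambient field. -/
noncomputable def XX {n : ℕ} (i : Fin n) : Kn n :=
  algebraMap (MvPolynomial (Fin n ⊕ Fin n) ℤ) (Kn n) (X (Sum.inr i))

/-- `f` is acyclic on `I`: the only directed cycles in the graph `{i → f(i) : i ∈ I}`
are loops at fixed points. -/
def IsAcyclicOn {n : ℕ} (I : Finset (Fin n)) (f : Fin n → Fin n) : Prop :=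
  ∀ i ∈ I, ∀ k : ℕ, 0 < k → (∀ r < k, f^[r] i ∈ I) → f^[k] i = i → f i = i

open Classical in
/-- The numerator `N_I` of `Y_I`: the generating function of acyclic functions `f : I → [n]`
(encoded as functions `Fin n → Fin n` fixing every vertex outside `I`), where a fixed point
`i ∈ I` contributes `A_i` and a non-fixed point contributes `X_{f i}`. -/
noncomputable def Ynum {n : ℕ} (E : Fin n → Fin n → Prop) (I : Finset (Fin n)) :
    MvPolynomial (Fin n ⊕ Fin n) ℤ :=
  ∑ f : Fin n → Fin n,
    if (∀ i, i ∉ I → f i = i) ∧ (∀ i ∈ I, f i = i ∨ E i (f i)) ∧ IsAcyclicOn I f then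
      ∏ i ∈ I, if f i = i then X (Sum.inl i) else X (Sum.inr (f i))
    else 0

/-- The Laurent polynomial `Y_I` (with `Y_∅ = 1`). -/
noncomputable def YY {n : ℕ} (E : Fin n → Fin n → Prop) (I : Finset (Fin n)) : Kn n :=
  algebraMap (MvPolynomial (Fin n ⊕ Fin n) ℤ) (Kn n) (Ynum E I) / ∏ i ∈ I, XX i

open Classical in
/-- `P_S^{i,j}`: the sum of `Y_{S − p}` over all simple paths `p : i →_S j` in the graph,
whose intermediate vertices lie in `S`.  A path with `m` edges is encoded as an injective
map `v : Fin (m+1) → Fin n` whose consecutive values are edges. -/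
noncomputable def PP {n : ℕ} (E : Fin n → Fin n → Prop) (S : Finset (Fin n)) (i j : Fin n) :
    Kn n :=
  ∑ m ∈ Finset.range (n + 1), ∑ v : Fin (m + 1) → Fin n,
    if Function.Injective v ∧ v 0 = i ∧ v (Fin.last m) = j ∧
        (∀ r : Fin m, E (v r.castSucc) (v r.succ)) ∧
        (∀ r : Fin (m + 1), r ≠ 0 → r ≠ Fin.last m → v r ∈ S) then
      YY E (S \ Finset.image v Finset.univ)
    else 0

open Classical in
/-- The matrix `𝒴`, with diagonal entries `Y_{{i}}`, entries `−1` at edges of the graph,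
and `0` elsewhere. -/
noncomputable def Ymat {n : ℕ} (E : Fin n → Fin n → Prop) : Matrix (Fin n) (Fin n) (Kn n) :=
  Matrix.of fun i j => if i = j then YY E {i} else if E i j then -1 else 0

noncomputable section Aux
open Classical

variable {n : ℕ}

def Cond (E : Fin n → Fin n → Prop) (I : Finset (Fin n)) (f : Fin n → Fin n) : Prop :=
  (∀ i, i ∉ I → f i = i) ∧ (∀ i ∈ I, f i = i ∨ E i (f i)) ∧ IsAcyclicOn I f

def expvec (I : Finset (Fin n)) (f : Fin n → Fin n) : (Fin n ⊕ Fin n) →₀ ℕ :=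
  ∑ i ∈ I, Finsupp.single (if f i = i then Sum.inl i else Sum.inr (f i)) 1

theorem prod_X_eq_monomial {α τ R : Type*} [CommSemiring R] (s : Finset α) (g : α → τ) :
    (∏ i ∈ s, (X (g i) : MvPolynomial τ R)) =
      monomial (∑ i ∈ s, Finsupp.single (g i) 1) 1 := by
  classical
  induction s using Finset.induction_on with
  | empty => simp [monomial_zero']
  | insert _ _ h ih =>
      rw [Finset.prod_insert h, Finset.sum_insert h, ih, X, monomial_mul, one_mul]

theorem Ynum_eq (E : Fin n → Fin n → Prop) (I : Finset (Fin n)) :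
    Ynum E I = ∑ f : Fin n → Fin n,
      if Cond E I f then monomial (expvec I f) (1 : ℤ) else 0 := by
  rw [Ynum]
  refine Finset.sum_congr rfl fun f _ => ?_
  rw [Cond]
  split_ifs with h
  · rw [show (∏ i ∈ I, if f i = i then (X (Sum.inl i) : MvPolynomial (Fin n ⊕ Fin n) ℤ)
        else X (Sum.inr (f i)))
        = ∏ i ∈ I, X (if f i = i then Sum.inl i else Sum.inr (f i)) from
        Finset.prod_congr rfl fun i _ => (apply_ite X _ _ _).symm]
    rw [prod_X_eq_monomial, expvec]
  · rfl

theorem coeff_Ynum (E : Fin n → Fin n → Prop) (I : Finset (Fin n)) (d : (Fin n ⊕ Fin n) →₀ ℕ) :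
    coeff d (Ynum E I) = ∑ f : Fin n → Fin n,
      if Cond E I f ∧ expvec I f = d then 1 else 0 := by
  rw [Ynum_eq, coeff_sum]
  refine Finset.sum_congr rfl fun f _ => ?_
  split_ifs with h1 h2 h2 <;>
    simp_all [coeff_monomial]

theorem expvec_apply_inl (I : Finset (Fin n)) (f : Fin n → Fin n) (i : Fin n) :
    expvec I f (Sum.inl i) = if i ∈ I ∧ f i = i then 1 else 0 := by
  rw [expvec, Finsupp.finset_sum_apply]
  have : ∀ i' ∈ I, (Finsupp.single (if f i' = i' then Sum.inl i' else Sum.inr (f i')) (1:ℕ))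
      (Sum.inl i) = if i' = i ∧ f i' = i' then 1 else 0 := by
    intro i' _
    by_cases hf : f i' = i' <;> simp [hf, Finsupp.single_apply, eq_comm]
  rw [Finset.sum_congr rfl this]
  simp only [ite_and]
  rw [Finset.sum_ite_eq' I i (fun i' => if f i' = i' then 1 else 0)]

theorem expvec_apply_inr (I : Finset (Fin n)) (f : Fin n → Fin n) (j : Fin n) :
    expvec I f (Sum.inr j) = (I.filter fun i => ¬ f i = i ∧ f i = j).card := by
  rw [expvec, Finsupp.finset_sum_apply, Finset.card_filter]
  refine Finset.sum_congr rfl fun i' _ => ?_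
  by_cases hf : f i' = i' <;> simp [hf, Finsupp.single_apply, eq_comm]

/-- indicator finsupp of a finset -/
def indF (U : Finset (Fin n)) : Fin n →₀ ℕ := ∑ i ∈ U, Finsupp.single i 1

theorem indF_apply (U : Finset (Fin n)) (j : Fin n) :
    indF U j = if j ∈ U then 1 else 0 := by
  rw [indF, Finsupp.finset_sum_apply]
  have : ∀ i ∈ U, (Finsupp.single i (1:ℕ)) j = if i = j then 1 else 0 := fun i _ =>
    Finsupp.single_apply
  rw [Finset.sum_congr rfl this, Finset.sum_ite_eq' U j (fun _ => 1)]

theorem indF_inj {U V : Finset (Fin n)} (h : indF U = indF V) : U = V := by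
  ext j
  have := congrFun (congrArg (fun d : Fin n →₀ ℕ => (d : Fin n → ℕ)) h) j
  simp only [indF_apply] at this
  by_cases hU : j ∈ U <;> by_cases hV : j ∈ V <;> simp_all

/-- the A-part of an exponent vector -/
def Apart (d : (Fin n ⊕ Fin n) →₀ ℕ) : Fin n →₀ ℕ :=
  Finsupp.equivFunOnFinite.symm (fun i => d (Sum.inl i))

/-- the X-part of an exponent vector -/
def Xpart (d : (Fin n ⊕ Fin n) →₀ ℕ) : Fin n →₀ ℕ :=
  Finsupp.equivFunOnFinite.symm (fun j => d (Sum.inr j))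

@[simp] theorem Apart_apply (d : (Fin n ⊕ Fin n) →₀ ℕ) (i : Fin n) :
    Apart d i = d (Sum.inl i) := rfl

@[simp] theorem Xpart_apply (d : (Fin n ⊕ Fin n) →₀ ℕ) (j : Fin n) :
    Xpart d j = d (Sum.inr j) := rfl

theorem Apart_expvec (I : Finset (Fin n)) (f : Fin n → Fin n) :
    Apart (expvec I f) = indF (I.filter fun i => f i = i) := by
  ext i
  rw [Apart_apply, expvec_apply_inl, indF_apply]
  simp [Finset.mem_filter]

theorem Xpart_expvec (I : Finset (Fin n)) (f : Fin n → Fin n) :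
    Xpart (expvec I f) = ∑ i ∈ I.filter (fun i => ¬ f i = i), Finsupp.single (f i) 1 := by
  ext j
  rw [Xpart_apply, expvec_apply_inr, Finsupp.finset_sum_apply, Finset.card_filter]
  rw [Finset.sum_filter]
  refine Finset.sum_congr rfl fun i _ => ?_
  by_cases hf : f i = i <;> by_cases hj : f i = j <;>
    simp [hf, hj, Finsupp.single_apply]

/-- exponent vector determines its parts -/
theorem expvec_eq_iff (I : Finset (Fin n)) (f : Fin n → Fin n) (d : (Fin n ⊕ Fin n) →₀ ℕ) :
    expvec I f = d ↔ Apart (expvec I f) = Apart d ∧ Xpart (expvec I f) = Xpart d := by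
  constructor
  · rintro rfl; exact ⟨rfl, rfl⟩
  · rintro ⟨h1, h2⟩
    ext v
    rcases v with i | j
    · have := congrFun (congrArg (fun d : Fin n →₀ ℕ => (d : Fin n → ℕ)) h1) i
      simpa using this
    · have := congrFun (congrArg (fun d : Fin n →₀ ℕ => (d : Fin n → ℕ)) h2) j
      simpa using this

@[simp] theorem Apart_zero : Apart (0 : (Fin n ⊕ Fin n) →₀ ℕ) = 0 := by ext i; simp
@[simp] theorem Xpart_zero : Xpart (0 : (Fin n ⊕ Fin n) →₀ ℕ) = 0 := by ext i; simp

theorem Apart_add (d d' : (Fin n ⊕ Fin n) →₀ ℕ) : Apart (d + d') = Apart d + Apart d' := by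
  ext i; simp

theorem Xpart_add (d d' : (Fin n ⊕ Fin n) →₀ ℕ) : Xpart (d + d') = Xpart d + Xpart d' := by
  ext i; simp

theorem Apart_single_inl (i : Fin n) (k : ℕ) :
    Apart (Finsupp.single (Sum.inl i) k) = Finsupp.single i k := by
  ext i'; simp [Finsupp.single_apply, Sum.inl.injEq]

theorem Apart_single_inr (j : Fin n) (k : ℕ) :
    Apart (Finsupp.single (Sum.inr j) k) = 0 := by
  ext i'; simp [Finsupp.single_apply]

theorem Xpart_single_inl (i : Fin n) (k : ℕ) :
    Xpart (Finsupp.single (Sum.inl i) k) = 0 := by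
  ext j'; simp [Finsupp.single_apply]

theorem Xpart_single_inr (j : Fin n) (k : ℕ) :
    Xpart (Finsupp.single (Sum.inr j) k) = Finsupp.single j k := by
  ext j'; simp [Finsupp.single_apply, Sum.inr.injEq]

/-- the splitting isomorphism -/
def ee (n : ℕ) : MvPolynomial (Fin n ⊕ Fin n) ℤ ≃ₐ[ℤ]
    MvPolynomial (Fin n) (MvPolynomial (Fin n) ℤ) := sumAlgEquiv ℤ (Fin n) (Fin n)

theorem ee_C (c : ℤ) : ee n (C c) = C (C c) := by
  have h1 : (C c : MvPolynomial (Fin n ⊕ Fin n) ℤ) = (c : MvPolynomial (Fin n ⊕ Fin n) ℤ) :=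
    eq_intCast (C : ℤ →+* MvPolynomial (Fin n ⊕ Fin n) ℤ) c
  have h2 : (C (C c) : MvPolynomial (Fin n) (MvPolynomial (Fin n) ℤ))
      = (c : MvPolynomial (Fin n) (MvPolynomial (Fin n) ℤ)) := by
    rw [show ((C (C c)) : MvPolynomial (Fin n) (MvPolynomial (Fin n) ℤ))
      = ((C : MvPolynomial (Fin n) ℤ →+* _).comp (C : ℤ →+* _)) c from rfl]
    exact eq_intCast _ c
  rw [h1, h2, map_intCast]

theorem ee_monomial (d : (Fin n ⊕ Fin n) →₀ ℕ) (c : ℤ) :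
    ee n (monomial d c) = monomial (Apart d) (monomial (Xpart d) c) := by
  induction d using Finsupp.induction with
  | zero => simp only [monomial_zero', Apart_zero, Xpart_zero]; exact ee_C c
  | single_add v k d hv hk ih =>
      rw [show Finsupp.single v k + d = d + Finsupp.single v k from add_comm _ _]
      rw [← mul_one c, ← monomial_mul, map_mul, ih, Apart_add, Xpart_add]
      rcases v with i | j
      · have : ee n (monomial (Finsupp.single (Sum.inl i) k) 1) = X i ^ k := by
          rw [← X_pow_eq_monomial, map_pow]
          simp [ee, sumToIter_Xl]
        rw [this, Apart_single_inl, Xpart_single_inl, X_pow_eq_monomial]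
        rw [monomial_mul]
        simp
      · have : ee n (monomial (Finsupp.single (Sum.inr j) k) 1) = C (X j ^ k) := by
          rw [← X_pow_eq_monomial, map_pow]
          simp [ee, sumToIter_Xr]
        rw [this, Apart_single_inr, Xpart_single_inr, X_pow_eq_monomial]
        rw [← monomial_zero' (R := MvPolynomial (Fin n) ℤ), monomial_mul, monomial_mul]

section Psi
variable {τ K : Type*} [CommRing K] [IsDomain K]

/-- the slicing map extracting the `i`-degree as a polynomial degree -/
def psi (i : τ) : MvPolynomial τ K →+* Polynomial (MvPolynomial τ K) :=
  MvPolynomial.eval₂Hom ((Polynomial.C).comp (MvPolynomial.C))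
    (fun j => if j = i then Polynomial.X else Polynomial.C (MvPolynomial.X j))

theorem psi_monomial (i : τ) (d : τ →₀ ℕ) (c : K) :
    psi i (monomial d c) =
      Polynomial.C (monomial (d.erase i) c) * Polynomial.X ^ (d i) := by
  classical
  rw [psi, eval₂Hom_monomial]
  have hC : ∀ (m : τ →₀ ℕ),
      (Polynomial.C (monomial m c) : Polynomial (MvPolynomial τ K))
        = Polynomial.C (C c) * Polynomial.C (monomial m 1) := by
    intro m
    rw [← map_mul]
    congr 1
    rw [MvPolynomial.C_mul_monomial, mul_one]
  by_cases hi : i ∈ d.support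
  · rw [Finsupp.prod, ← Finset.mul_prod_erase _ _ hi, if_pos rfl]
    have h2 : ∀ j ∈ d.support.erase i,
        (if j = i then (Polynomial.X : Polynomial (MvPolynomial τ K))
          else Polynomial.C (MvPolynomial.X j)) ^ d j
        = Polynomial.C ((MvPolynomial.X j) ^ (d.erase i) j) := by
      intro j hj
      have hji : j ≠ i := (Finset.mem_erase.mp hj).1
      rw [if_neg hji, ← map_pow, Finsupp.erase_ne hji]
    rw [Finset.prod_congr rfl h2, ← map_prod]
    have h3 : (∏ j ∈ d.support.erase i, (MvPolynomial.X j) ^ (d.erase i) j)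
        = monomial (d.erase i) (1 : K) := by
      rw [← prod_X_pow_eq_monomial, Finsupp.support_erase]
    rw [h3, hC]
    simp only [RingHom.comp_apply]
    ring
  · have h0 : d i = 0 := Finsupp.notMem_support_iff.mp hi
    have he : d.erase i = d := by
      ext j
      rcases eq_or_ne j i with rfl | hj
      · simp [h0]
      · rw [Finsupp.erase_ne hj]
    rw [h0, pow_zero, mul_one, he, Finsupp.prod]
    have h2 : ∀ j ∈ d.support,
        (if j = i then (Polynomial.X : Polynomial (MvPolynomial τ K))
          else Polynomial.C (MvPolynomial.X j)) ^ d j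
        = Polynomial.C ((MvPolynomial.X j) ^ d j) := by
      intro j hj
      have hji : j ≠ i := by rintro rfl; exact hi hj
      rw [if_neg hji, ← map_pow]
    rw [Finset.prod_congr rfl h2, ← map_prod, prod_X_pow_eq_monomial, hC]
    simp only [RingHom.comp_apply, map_mul]

theorem psi_coeff_ne_zero_iff (i : τ) (p : MvPolynomial τ K) (a : ℕ) :
    (psi i p).coeff a ≠ 0 ↔ ∃ d ∈ p.support, d i = a := by
  classical
  have hrep : (psi i p).coeff a
      = ∑ d ∈ p.support, if d i = a then monomial (d.erase i) (coeff d p) else 0 := by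
    conv_lhs => rw [MvPolynomial.as_sum p]
    rw [map_sum, Polynomial.finset_sum_coeff]
    refine Finset.sum_congr rfl fun d _ => ?_
    rw [psi_monomial, Polynomial.coeff_C_mul, Polynomial.coeff_X_pow]
    split_ifs with h1 h2 h2 <;> simp_all [eq_comm]
  constructor
  · intro h
    by_contra hc
    push_neg at hc
    rw [hrep] at h
    refine h (Finset.sum_eq_zero fun d hd => ?_)
    rw [if_neg (hc d hd)]
  · rintro ⟨d₀, hd₀, ha⟩
    intro h
    have : MvPolynomial.coeff (d₀.erase i) ((psi i p).coeff a) = coeff d₀ p := by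
      rw [hrep, MvPolynomial.coeff_sum]
      rw [Finset.sum_eq_single d₀]
      · rw [if_pos ha, coeff_monomial, if_pos rfl]
      · intro d hd hne
        split_ifs with h1
        · rw [coeff_monomial, if_neg]
          intro hee
          refine hne ?_
          ext j
          rcases eq_or_ne j i with rfl | hj
          · rw [h1, ha]
          · rw [← Finsupp.erase_ne (f := d) hj, ← Finsupp.erase_ne (f := d₀) hj, hee]
        · exact MvPolynomial.coeff_zero _
      · intro h0; exact absurd hd₀ h0
    rw [h] at this
    simp only [MvPolynomial.coeff_zero] at this
    exact MvPolynomial.mem_support_iff.mp hd₀ this.symm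

theorem exists_supp_mul {p q : MvPolynomial τ K} {dp dq : τ →₀ ℕ}
    (hp : dp ∈ p.support) (hq : dq ∈ q.support) (i : τ) :
    ∃ d ∈ (p * q).support, dp i + dq i ≤ d i := by
  classical
  have hp' : (psi i p).coeff (dp i) ≠ 0 :=
    (psi_coeff_ne_zero_iff i p (dp i)).mpr ⟨dp, hp, rfl⟩
  have hq' : (psi i q).coeff (dq i) ≠ 0 :=
    (psi_coeff_ne_zero_iff i q (dq i)).mpr ⟨dq, hq, rfl⟩
  have hpne : psi i p ≠ 0 := fun h => hp' (by rw [h]; simp)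
  have hqne : psi i q ≠ 0 := fun h => hq' (by rw [h]; simp)
  have hlead : ((psi i p) * (psi i q)).coeff ((psi i p).natDegree + (psi i q).natDegree) ≠ 0 := by
    rw [Polynomial.coeff_mul_degree_add_degree]
    exact mul_ne_zero (Polynomial.leadingCoeff_ne_zero.mpr hpne)
      (Polynomial.leadingCoeff_ne_zero.mpr hqne)
  rw [← map_mul] at hlead
  obtain ⟨d, hd, hdi⟩ := (psi_coeff_ne_zero_iff i (p * q) _).mp hlead
  refine ⟨d, hd, ?_⟩
  rw [hdi]
  exact Nat.add_le_add (Polynomial.le_natDegree_of_ne_zero hp')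
    (Polynomial.le_natDegree_of_ne_zero hq')

end Psi

/-- slice of a polynomial at A-part `U` -/
def sl (U : Finset (Fin n)) (p : MvPolynomial (Fin n ⊕ Fin n) ℤ) : MvPolynomial (Fin n) ℤ :=
  coeff (indF U) (ee n p)

theorem sl_Ynum (E : Fin n → Fin n → Prop) (I U : Finset (Fin n)) :
    sl U (Ynum E I) = ∑ f : Fin n → Fin n,
      if Cond E I f ∧ I.filter (fun i => f i = i) = U then
        monomial (Xpart (expvec I f)) (1 : ℤ) else 0 := by
  rw [sl, Ynum_eq, map_sum, coeff_sum]
  refine Finset.sum_congr rfl fun f _ => ?_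
  by_cases hc : Cond E I f
  · rw [if_pos hc, ee_monomial, Apart_expvec, coeff_monomial]
    by_cases hf : I.filter (fun i => f i = i) = U
    · rw [if_pos (by rw [hf]), if_pos ⟨hc, hf⟩]
    · rw [if_neg (fun h => hf (indF_inj h)), if_neg (fun h => hf h.2)]
  · rw [if_neg hc, if_neg (fun h => hc h.1), map_zero, coeff_zero]

theorem coeff_sl_Ynum (E : Fin n → Fin n → Prop) (I U : Finset (Fin n)) (m : Fin n →₀ ℕ) :
    coeff m (sl U (Ynum E I)) = ∑ f : Fin n → Fin n,
      if Cond E I f ∧ I.filter (fun i => f i = i) = U ∧ Xpart (expvec I f) = m then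
        (1 : ℤ) else 0 := by
  rw [sl_Ynum, coeff_sum]
  refine Finset.sum_congr rfl fun f _ => ?_
  split_ifs with h1 h2 h2 <;> simp_all [coeff_monomial]

theorem coeff_sl_Ynum_nonneg (E : Fin n → Fin n → Prop) (I U : Finset (Fin n))
    (m : Fin n →₀ ℕ) : 0 ≤ coeff m (sl U (Ynum E I)) := by
  rw [coeff_sl_Ynum]
  refine Finset.sum_nonneg fun f _ => ?_
  split_ifs <;> norm_num

theorem supp_ee_Ynum (E : Fin n → Fin n → Prop) (I : Finset (Fin n)) :
    ∀ d ∈ (ee n (Ynum E I)).support, ∃ U ⊆ I, d = indF U := by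
  intro d hd
  rw [MvPolynomial.mem_support_iff] at hd
  rw [Ynum_eq, map_sum, coeff_sum] at hd
  obtain ⟨f, -, hf⟩ := Finset.exists_ne_zero_of_sum_ne_zero hd
  by_cases hc : Cond E I f
  · rw [if_pos hc, ee_monomial, Apart_expvec, coeff_monomial] at hf
    refine ⟨I.filter (fun i => f i = i), Finset.filter_subset _ _, ?_⟩
    by_contra hne
    exact hf (by rw [if_neg (fun h => hne h.symm)])
  · rw [if_neg hc, map_zero, coeff_zero] at hf
    exact absurd rfl hf

theorem indF_add_indF (U V : Finset (Fin n)) (h : ∀ i, ¬(i ∈ U ∧ i ∈ V)) :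
    indF U + indF V = indF (U ∪ V) := by
  ext i
  simp only [Finsupp.add_apply, indF_apply, Finset.mem_union]
  by_cases hU : i ∈ U <;> by_cases hV : i ∈ V <;> simp_all [h i]

theorem coeff_indF_mul {R : Type*} [CommRing R] (P Q : MvPolynomial (Fin n) R)
    (S T U : Finset (Fin n))
    (hPS : ∀ d ∈ P.support, ∀ i, d i ≠ 0 → i ∈ S)
    (hQT : ∀ d ∈ Q.support, ∀ i, d i ≠ 0 → i ∈ T)
    (hST : ∀ i, ¬(i ∈ S ∧ i ∈ T)) (hU : U ⊆ S ∪ T) :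
    coeff (indF U) (P * Q) = coeff (indF (U ∩ S)) P * coeff (indF (U ∩ T)) Q := by
  rw [coeff_mul]
  rw [Finset.sum_eq_single (indF (U ∩ S), indF (U ∩ T))]
  · rintro ⟨d₁, d₂⟩ hmem hne
    rw [Finset.HasAntidiagonal.mem_antidiagonal] at hmem
    by_contra hterm
    have h1 : coeff d₁ P ≠ 0 := fun h => hterm (by simp [h])
    have h2 : coeff d₂ Q ≠ 0 := fun h => hterm (by simp [h])
    have hd1 : ∀ i, d₁ i ≠ 0 → i ∈ S :=
      fun i hi => hPS d₁ (MvPolynomial.mem_support_iff.mpr h1) i hi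
    have hd2 : ∀ i, d₂ i ≠ 0 → i ∈ T :=
      fun i hi => hQT d₂ (MvPolynomial.mem_support_iff.mpr h2) i hi
    have key : ∀ i, d₁ i = indF (U ∩ S) i ∧ d₂ i = indF (U ∩ T) i := by
      intro i
      have hsum : d₁ i + d₂ i = indF U i := by
        rw [← hmem]; rfl
      rw [indF_apply] at hsum
      rw [indF_apply, indF_apply]
      by_cases hiU : i ∈ U
      · rw [if_pos hiU] at hsum
        by_cases hiS : i ∈ S
        · have : d₂ i = 0 := by
            by_contra hne2
            exact hST i ⟨hiS, hd2 i hne2⟩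
          constructor
          · rw [if_pos (Finset.mem_inter.mpr ⟨hiU, hiS⟩)]; omega
          · rw [if_neg (fun hm => hST i ⟨hiS, (Finset.mem_inter.mp hm).2⟩)]; omega
        · have hiT : i ∈ T := by
            rcases Finset.mem_union.mp (hU hiU) with h | h
            · exact absurd h hiS
            · exact h
          have : d₁ i = 0 := by
            by_contra hne1
            exact hiS (hd1 i hne1)
          constructor
          · rw [if_neg (fun hm => hiS (Finset.mem_inter.mp hm).2)]; omega
          · rw [if_pos (Finset.mem_inter.mpr ⟨hiU, hiT⟩)]; omega
      · rw [if_neg hiU] at hsum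
        rw [if_neg (fun hm => hiU (Finset.mem_inter.mp hm).1),
          if_neg (fun hm => hiU (Finset.mem_inter.mp hm).1)]
        omega
    refine hne ?_
    have e1 : d₁ = indF (U ∩ S) := Finsupp.ext fun i => (key i).1
    have e2 : d₂ = indF (U ∩ T) := Finsupp.ext fun i => (key i).2
    rw [e1, e2]
  · intro hmem
    exfalso
    refine hmem ?_
    rw [Finset.HasAntidiagonal.mem_antidiagonal]
    rw [indF_add_indF _ _ (fun i hi => hST i ⟨(Finset.mem_inter.mp hi.1).2,
      (Finset.mem_inter.mp hi.2).2⟩)]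
    congr 1
    ext i
    simp only [Finset.mem_union, Finset.mem_inter]
    constructor
    · rintro (⟨h, _⟩ | ⟨h, _⟩) <;> exact h
    · intro hiU
      rcases Finset.mem_union.mp (hU hiU) with h | h
      · exact Or.inl ⟨hiU, h⟩
      · exact Or.inr ⟨hiU, h⟩

theorem sum_single_apply {α : Type*} (s : Finset α) (g : α → Fin n) (j : Fin n) :
    (∑ i ∈ s, Finsupp.single (g i) (1 : ℕ)) j = (s.filter fun i => g i = j).card := by
  rw [Finsupp.finset_sum_apply, Finset.card_filter]
  exact Finset.sum_congr rfl fun i _ => Finsupp.single_apply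

theorem Cond_id (E : Fin n → Fin n → Prop) (I : Finset (Fin n)) :
    Cond E I (fun x => x) :=
  ⟨fun _ _ => rfl, fun _ _ => Or.inl rfl, fun _ _ _ _ _ _ => rfl⟩

theorem sl_self (E : Fin n → Fin n → Prop) (I : Finset (Fin n)) :
    sl I (Ynum E I) = 1 := by
  rw [sl_Ynum]
  rw [Finset.sum_eq_single (fun x => x : Fin n → Fin n)]
  · rw [if_pos]
    · rw [Xpart_expvec]
      have : I.filter (fun i => ¬ (fun x => x) i = i) = ∅ := by
        simp
      rw [this, Finset.sum_empty]
      simp [monomial_zero']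
    · refine ⟨Cond_id E I, ?_⟩
      simp
  · intro f _ hne
    rw [if_neg]
    rintro ⟨hc, hfix⟩
    refine hne (funext fun x => ?_)
    by_cases hx : x ∈ I
    · have : x ∈ I.filter (fun i => f i = i) := by rw [hfix]; exact hx
      exact (Finset.mem_filter.mp this).2
    · exact hc.1 x hx
  · intro h
    exact absurd (Finset.mem_univ _) h

theorem nonfix_filter (I C : Finset (Fin n)) (hCI : C ⊆ I) (f : Fin n → Fin n)
    (hfix : I.filter (fun i => f i = i) = I \ C) :
    I.filter (fun i => ¬ f i = i) = C := by
  rw [Finset.filter_not, hfix]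
  exact Finset.sdiff_sdiff_eq_self hCI

/-- no acyclic `f`, nonfixed exactly on `C`, can permute `C` -/
theorem no_perm (E : Fin n → Fin n → Prop) (I C : Finset (Fin n)) (hCI : C ⊆ I)
    (hC : C.Nonempty) :
    coeff (∑ x ∈ C, Finsupp.single x 1) (sl (I \ C) (Ynum E I)) = 0 := by
  rw [coeff_sl_Ynum]
  refine Finset.sum_eq_zero fun f _ => ?_
  rw [if_neg]
  rintro ⟨hcond, hfix, hxp⟩
  rw [Xpart_expvec, nonfix_filter I C hCI f hfix] at hxp
  -- counting consequence
  have hcount : ∀ j, (C.filter fun i => f i = j).card = if j ∈ C then 1 else 0 := by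
    intro j
    have h1 := congrFun (congrArg (fun d : Fin n →₀ ℕ => (d : Fin n → ℕ)) hxp) j
    rw [sum_single_apply, sum_single_apply] at h1
    rw [h1, Finset.filter_eq']
    split_ifs <;> simp
  -- f maps C into C
  have hmapsto : ∀ x ∈ C, f x ∈ C := by
    intro x hx
    have : 0 < (C.filter fun i => f i = f x).card :=
      Finset.card_pos.mpr ⟨x, Finset.mem_filter.mpr ⟨hx, rfl⟩⟩
    rw [hcount (f x)] at this
    by_contra hfx
    rw [if_neg hfx] at this
    omega
  -- f is injective on C
  have hinj : ∀ x ∈ C, ∀ y ∈ C, f x = f y → x = y := by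
    intro x hx y hy hxy
    by_contra hne
    have hsub : {x, y} ⊆ C.filter fun i => f i = f x := by
      intro z hz
      rcases Finset.mem_insert.mp hz with rfl | hz
      · exact Finset.mem_filter.mpr ⟨hx, rfl⟩
      · rw [Finset.mem_singleton.mp hz]
        exact Finset.mem_filter.mpr ⟨hy, hxy.symm⟩
    have h2 : ({x, y} : Finset (Fin n)).card = 2 := Finset.card_pair hne
    have := Finset.card_le_card hsub
    rw [h2, hcount (f x), if_pos (hmapsto x hx)] at this
    omega
  -- nonfixed on C
  have hnonfix : ∀ x ∈ C, f x ≠ x := by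
    intro x hx
    have : x ∉ I \ C := fun h => (Finset.mem_sdiff.mp h).2 hx
    rw [← hfix] at this
    intro hfx
    exact this (Finset.mem_filter.mpr ⟨hCI hx, hfx⟩)
  -- iterates stay in C
  obtain ⟨x₀, hx₀⟩ := hC
  have hiter : ∀ r : ℕ, f^[r] x₀ ∈ C := by
    intro r
    induction r with
    | zero => exact hx₀
    | succ r ih => rw [Function.iterate_succ_apply']; exact hmapsto _ ih
  -- pigeonhole
  have : ∃ a b : ℕ, a ≠ b ∧ (⟨f^[a] x₀, hiter a⟩ : {z // z ∈ C}) = ⟨f^[b] x₀, hiter b⟩ := by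
    obtain ⟨a, b, hab, h⟩ := Finite.exists_ne_map_eq_of_infinite
      (fun r : ℕ => (⟨f^[r] x₀, hiter r⟩ : {z // z ∈ C}))
    exact ⟨a, b, hab, h⟩
  obtain ⟨a, b, hab, heq⟩ := this
  wlog hlt : a < b generalizing a b
  · exact this b a hab.symm heq.symm (by omega)
  have heq' : f^[a] (f^[b - a] x₀) = f^[a] x₀ := by
    rw [← Function.iterate_add_apply]
    have : a + (b - a) = b := by omega
    rw [this]
    exact (congrArg Subtype.val heq).symm
  -- cancel
  have hcancel : ∀ a : ℕ, ∀ u v : Fin n, u ∈ C → v ∈ C → (∀ r : ℕ, f^[r] u ∈ C) →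
      (∀ r : ℕ, f^[r] v ∈ C) → f^[a] u = f^[a] v → u = v := by
    intro a
    induction a with
    | zero => intro u v _ _ _ _ h; exact h
    | succ a ih =>
        intro u v hu hv hiu hiv h
        rw [Function.iterate_succ_apply, Function.iterate_succ_apply] at h
        have := ih (f u) (f v) (hmapsto u hu) (hmapsto v hv)
          (fun r => by rw [← Function.iterate_succ_apply]; exact hiu (r+1))
          (fun r => by rw [← Function.iterate_succ_apply]; exact hiv (r+1)) h
        exact hinj u hu v hv this
  have hper : f^[b - a] x₀ = x₀ := by
    refine hcancel a _ _ (hiter _) hx₀ ?_ (fun r => hiter r) heq'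
    intro r
    rw [← Function.iterate_add_apply]
    exact hiter _
  have hk : 0 < b - a := by omega
  have := hcond.2.2 x₀ (hCI hx₀) (b - a) hk (fun r _ => hCI (hiter r)) hper
  exact hnonfix x₀ hx₀ this

/-- the witness `f₁` shows a positive coefficient in the slice at `I \ B`,
where `B = C ∩ S` is a part of the cycle `C`. -/
theorem coeff_restrict_pos (E : Fin n → Fin n → Prop) (hE : ∀ i, ¬ E i i)
    (I C B : Finset (Fin n)) (σf : Fin n → Fin n)
    (hCI : C ⊆ I) (hBC : B ⊆ C)
    (hedge : ∀ x ∈ C, E x (σf x)) (hclose : ∀ x ∈ C, σf x ∈ C)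
    (hmin : ∀ D : Finset (Fin n), D ⊆ C → D.Nonempty → (∀ x ∈ D, σf x ∈ D) → D = C)
    (hnotall : ∃ y ∈ C, y ∉ B) :
    1 ≤ coeff (∑ x ∈ B, Finsupp.single (σf x) 1) (sl (I \ B) (Ynum E I)) := by
  classical
  set f₁ : Fin n → Fin n := fun x => if x ∈ B then σf x else x with hf₁
  have hfix : ∀ x, x ∉ B → f₁ x = x := fun x hx => by rw [hf₁]; simp [hx]
  have hmove : ∀ x ∈ B, f₁ x = σf x := fun x hx => by rw [hf₁]; simp [hx]
  have hne : ∀ x ∈ B, f₁ x ≠ x := by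
    intro x hx h
    rw [hmove x hx] at h
    have := hedge x (hBC hx)
    rw [h] at this
    exact hE x this
  -- acyclicity of f₁
  have hacyc : IsAcyclicOn I f₁ := by
    intro i hi k hk hiter hcyc
    by_cases hiB : i ∈ B
    · exfalso
      -- all iterates up to k stay in B
      have hstay : ∀ r : ℕ, r ≤ k → f₁^[r] i ∈ B := by
        by_contra hcon
        push_neg at hcon
        obtain ⟨r, hrk, hrB⟩ := hcon
        have hfrom : ∀ s : ℕ, f₁^[r + s] i = f₁^[r] i := by
          intro s
          induction s with
          | zero => rfl
          | succ s ih =>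
              rw [← Nat.add_assoc, Function.iterate_succ_apply', ih]
              exact hfix _ hrB
        have : f₁^[k] i = f₁^[r] i := by
          have h1 : r + (k - r) = k := by omega
          rw [← h1, hfrom]
        rw [hcyc] at this
        exact hrB (this ▸ hiB)
      -- iterates are σf iterates
      have hsig : ∀ r : ℕ, r ≤ k → f₁^[r] i = σf^[r] i ∧ σf^[r] i ∈ B := by
        intro r hr
        induction r with
        | zero => exact ⟨rfl, hiB⟩
        | succ r ih =>
            obtain ⟨h1, h2⟩ := ih (by omega)
            constructor
            · rw [Function.iterate_succ_apply', Function.iterate_succ_apply', h1,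
                hmove _ h2]
            · have := hstay (r+1) hr
              rw [Function.iterate_succ_apply', h1, hmove _ h2] at this
              rw [Function.iterate_succ_apply']
              exact this
      -- the orbit set
      set D : Finset (Fin n) := Finset.image (fun r : Fin k => σf^[r.val] i) Finset.univ
        with hD
      have hDC : D ⊆ C := by
        intro z hz
        rw [hD] at hz
        obtain ⟨r, -, rfl⟩ := Finset.mem_image.mp hz
        exact hBC (hsig r.val (by omega)).2
      have hDne : D.Nonempty := ⟨i, Finset.mem_image.mpr ⟨⟨0, hk⟩, Finset.mem_univ _, rfl⟩⟩
      have hDclosed : ∀ x ∈ D, σf x ∈ D := by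
        intro x hx
        obtain ⟨r, -, rfl⟩ := Finset.mem_image.mp hx
        by_cases hrk : r.val + 1 < k
        · refine Finset.mem_image.mpr ⟨⟨r.val + 1, hrk⟩, Finset.mem_univ _, ?_⟩
          rw [Function.iterate_succ_apply']
        · have hrk' : r.val + 1 = k := by omega
          have : σf (σf^[r.val] i) = i := by
            rw [← Function.iterate_succ_apply' σf r.val i,
              show (r.val).succ = k from hrk', ← (hsig k le_rfl).1, hcyc]
          rw [this]
          exact Finset.mem_image.mpr ⟨⟨0, hk⟩, Finset.mem_univ _, rfl⟩
      have := hmin D hDC hDne hDclosed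
      obtain ⟨y, hyC, hyB⟩ := hnotall
      rw [← this] at hyC
      obtain ⟨r, -, rfl⟩ := Finset.mem_image.mp hyC
      exact hyB (hsig r.val (by omega)).2
    · exact hfix i hiB
  have hcond : Cond E I f₁ := by
    refine ⟨fun i hi => hfix i (fun h => hi (hCI (hBC h))), fun i hi => ?_, hacyc⟩
    by_cases hiB : i ∈ B
    · exact Or.inr (by rw [hmove i hiB]; exact hedge i (hBC hiB))
    · exact Or.inl (hfix i hiB)
  have hfilter : I.filter (fun i => f₁ i = i) = I \ B := by
    ext i
    simp only [Finset.mem_filter, Finset.mem_sdiff]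
    constructor
    · rintro ⟨hi, hfi⟩
      exact ⟨hi, fun hiB => hne i hiB hfi⟩
    · rintro ⟨hi, hiB⟩
      exact ⟨hi, hfix i hiB⟩
  have hxp : Xpart (expvec I f₁) = ∑ x ∈ B, Finsupp.single (σf x) 1 := by
    rw [Xpart_expvec, nonfix_filter I B (fun x hx => hCI (hBC hx)) f₁ hfilter]
    exact Finset.sum_congr rfl fun x hx => by rw [hmove x hx]
  rw [coeff_sl_Ynum]
  have hterm : (if Cond E I f₁ ∧ I.filter (fun i => f₁ i = i) = I \ B ∧
      Xpart (expvec I f₁) = ∑ x ∈ B, Finsupp.single (σf x) 1 then (1:ℤ) else 0) = 1 := by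
    rw [if_pos ⟨hcond, hfilter, hxp⟩]
  calc (1:ℤ) = _ := hterm.symm
    _ ≤ _ := Finset.single_le_sum (f := fun f => if Cond E I f ∧
        I.filter (fun i => f i = i) = I \ B ∧
        Xpart (expvec I f) = ∑ x ∈ B, Finsupp.single (σf x) 1 then (1:ℤ) else 0)
        (fun f _ => by split_ifs <;> norm_num) (Finset.mem_univ f₁)

theorem exists_cross_edge (E : Fin n → Fin n → Prop) (I S : Finset (Fin n))
    {a b : Fin n} (h : ReachIn E I a b) (ha : a ∈ S) (hb : b ∉ S) :
    ∃ x y, x ∈ S ∧ x ∈ I ∧ y ∈ I ∧ y ∉ S ∧ E x y := by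
  induction h using Relation.ReflTransGen.head_induction_on with
  | refl => exact absurd ha hb
  | head hstep _ ih =>
      rename_i x c _
      obtain ⟨hE, hxI, hcI⟩ := hstep
      by_cases hcS : c ∈ S
      · exact ih hcS
      · exact ⟨x, c, ha, hxI, hcI, hcS, hE⟩

theorem exists_path (E : Fin n → Fin n → Prop) (I : Finset (Fin n)) {a b : Fin n}
    (h : ReachIn E I a b) (haI : a ∈ I) :
    ∃ k, ∃ v : Fin (k+1) → Fin n, v 0 = a ∧ v (Fin.last k) = b ∧
      (∀ r : Fin k, E (v r.castSucc) (v r.succ)) ∧ (∀ r, v r ∈ I) := by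
  induction h with
  | refl => exact ⟨0, fun _ => a, rfl, rfl, fun r => r.elim0, fun _ => haI⟩
  | @tail b' c hr hstep ih =>
      obtain ⟨k, v, hv0, hvl, hve, hvI⟩ := ih
      obtain ⟨hEbc, hbI, hcI⟩ := hstep
      refine ⟨k + 1, Fin.snoc v c, ?_, ?_, ?_, ?_⟩
      · rw [show (0 : Fin (k+2)) = Fin.castSucc 0 from rfl, Fin.snoc_castSucc, hv0]
      · rw [Fin.snoc_last]
      · intro r
        refine Fin.lastCases ?_ ?_ r
        · rw [Fin.succ_last, Fin.snoc_last, Fin.snoc_castSucc, hvl]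
          exact hEbc
        · intro s
          rw [Fin.succ_castSucc, Fin.snoc_castSucc, Fin.snoc_castSucc]
          exact hve s
      · intro r
        refine Fin.lastCases ?_ ?_ r
        · rw [Fin.snoc_last]; exact hcI
        · intro s; rw [Fin.snoc_castSucc]; exact hvI s

theorem path_dedup (E : Fin n → Fin n → Prop) (I : Finset (Fin n)) (a b : Fin n) :
    ∀ k (v : Fin (k+1) → Fin n), v 0 = a → v (Fin.last k) = b →
    (∀ r : Fin k, E (v r.castSucc) (v r.succ)) → (∀ r, v r ∈ I) →
    ∃ m, ∃ w : Fin (m+1) → Fin n, w 0 = a ∧ w (Fin.last m) = b ∧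
      (∀ r : Fin m, E (w r.castSucc) (w r.succ)) ∧ (∀ r, w r ∈ I) ∧
      Function.Injective w := by
  intro k
  induction k using Nat.strong_induction_on with
  | _ k ih =>
    intro v hv0 hvl hve hvI
    by_cases hinj : Function.Injective v
    · exact ⟨k, v, hv0, hvl, hve, hvI, hinj⟩
    · obtain ⟨x, y, heq0, hne0⟩ := Function.not_injective_iff.mp hinj
      have hpair : ∃ r₁ r₂ : Fin (k+1), (r₁ : ℕ) < (r₂ : ℕ) ∧ v r₁ = v r₂ := by
        rcases lt_or_gt_of_ne hne0 with h | h
        · exact ⟨x, y, h, heq0⟩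
        · exact ⟨y, x, h, heq0.symm⟩
      obtain ⟨r₁, r₂, hlt, heq⟩ := hpair
      have hr₂k : (r₂ : ℕ) ≤ k := by omega
      set Δ : ℕ := (r₂ : ℕ) - (r₁ : ℕ) with hΔ
      have hΔ1 : 1 ≤ Δ := by omega
      set w : Fin (k - Δ + 1) → Fin n := fun s =>
        if (s : ℕ) ≤ (r₁ : ℕ) then v ⟨(s : ℕ), by omega⟩
        else v ⟨(s : ℕ) + Δ, by omega⟩ with hw
      have hwval : ∀ s : Fin (k - Δ + 1), ((s : ℕ) ≤ (r₁ : ℕ) → w s = v ⟨(s : ℕ), by omega⟩)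
          ∧ ((r₁ : ℕ) < (s : ℕ) → w s = v ⟨(s : ℕ) + Δ, by omega⟩) := by
        intro s
        constructor
        · intro hs; rw [hw]; simp only [hs, if_pos]
        · intro hs; rw [hw]; simp only [if_neg (by omega : ¬ (s : ℕ) ≤ (r₁ : ℕ))]
      refine ih (k - Δ) (by omega) w ?_ ?_ ?_ ?_
      · have h0 := (hwval 0).1 (by simp)
        rw [h0, ← hv0]
        exact congrArg v (Fin.ext (by simp))
      · by_cases hcase : k - Δ ≤ (r₁ : ℕ)
        · have h1 : (r₂ : ℕ) = k := by omega
          have h2 : k - Δ = (r₁ : ℕ) := by omega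
          have := (hwval (Fin.last (k - Δ))).1 (by simp [Fin.last, h2])
          rw [this, ← hvl]
          have hr2last : r₂ = Fin.last k := Fin.ext (by simp [Fin.last, h1])
          have : v r₁ = v (Fin.last k) := by rw [heq, hr2last]
          rw [← this]
          congr 1
          exact Fin.ext (by simp [Fin.last, h2])
        · have := (hwval (Fin.last (k - Δ))).2 (by simp [Fin.last]; omega)
          rw [this, ← hvl]
          congr 1
          exact Fin.ext (by simp [Fin.last]; omega)
      · intro s
        have hs1 : (s.castSucc : ℕ) = (s : ℕ) := rfl
        have hs2 : (s.succ : ℕ) = (s : ℕ) + 1 := rfl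
        by_cases hc1 : (s : ℕ) + 1 ≤ (r₁ : ℕ)
        · rw [(hwval s.castSucc).1 (by omega), (hwval s.succ).1 (by omega)]
          have hsk : (s : ℕ) < k := by omega
          have e1 : (⟨(s.castSucc : ℕ), by omega⟩ : Fin (k+1)) = (⟨(s:ℕ), hsk⟩ : Fin k).castSucc :=
            Fin.ext rfl
          have e2 : (⟨(s.succ : ℕ), by omega⟩ : Fin (k+1)) = (⟨(s:ℕ), hsk⟩ : Fin k).succ :=
            Fin.ext rfl
          rw [e1, e2]
          exact hve _
        · by_cases hc2 : (s : ℕ) ≤ (r₁ : ℕ)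
          · -- s = r₁
            have hsr : (s : ℕ) = (r₁ : ℕ) := by omega
            have hr2k : (r₂ : ℕ) < k := by
              have : (s : ℕ) + 1 ≤ k - Δ := by omega
              omega
            rw [(hwval s.castSucc).1 (by rw [hs1]; omega), (hwval s.succ).2 (by rw [hs2]; omega)]
            have e1 : (⟨(s.castSucc : ℕ), by omega⟩ : Fin (k+1)) = r₁ := Fin.ext (by rw [hs1, hsr])
            have e2 : (⟨(s.succ : ℕ) + Δ, by omega⟩ : Fin (k+1)) = (⟨(r₂:ℕ), hr2k⟩ : Fin k).succ :=
              Fin.ext (by simp [hs2]; omega)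
            rw [e1, e2, heq]
            have e3 : v r₂ = v ((⟨(r₂:ℕ), hr2k⟩ : Fin k).castSucc) :=
              congrArg v (Fin.ext rfl)
            rw [e3]
            exact hve _
          · have hsk : (s : ℕ) + Δ < k := by
              have := s.isLt
              omega
            rw [(hwval s.castSucc).2 (by omega), (hwval s.succ).2 (by rw [hs2]; omega)]
            have e1 : (⟨(s.castSucc : ℕ) + Δ, by omega⟩ : Fin (k+1))
                = (⟨(s:ℕ) + Δ, hsk⟩ : Fin k).castSucc := Fin.ext rfl
            have e2 : (⟨(s.succ : ℕ) + Δ, by omega⟩ : Fin (k+1))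
                = (⟨(s:ℕ) + Δ, hsk⟩ : Fin k).succ := Fin.ext (by simp [hs2]; omega)
            rw [e1, e2]
            exact hve _
      · intro s
        by_cases hc : (s : ℕ) ≤ (r₁ : ℕ)
        · rw [(hwval s).1 hc]; exact hvI _
        · rw [(hwval s).2 (by omega)]; exact hvI _

open Fin.NatCast Fin.CommRing in
theorem exists_cycle (E : Fin n → Fin n → Prop) (I S : Finset (Fin n))
    (hreach : ∀ a ∈ I, ∀ b ∈ I, ReachIn E I a b)
    (hS : ∃ s ∈ I, s ∈ S) (hT : ∃ t ∈ I, t ∉ S) :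
    ∃ (C : Finset (Fin n)) (σf : Fin n → Fin n),
      C ⊆ I ∧ (∃ x ∈ C, x ∈ S) ∧ (∃ y ∈ C, y ∉ S) ∧
      (∀ x ∈ C, E x (σf x)) ∧ (∀ x ∈ C, σf x ∈ C) ∧
      ((∑ x ∈ C, Finsupp.single (σf x) 1 : Fin n →₀ ℕ) = ∑ x ∈ C, Finsupp.single x 1) ∧
      (∀ D : Finset (Fin n), D ⊆ C → D.Nonempty → (∀ x ∈ D, σf x ∈ D) → D = C) := by
  classical
  obtain ⟨s, hsI, hsS⟩ := hS
  obtain ⟨t, htI, htS⟩ := hT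
  obtain ⟨x, y, hxS, hxI, hyI, hyS, hExy⟩ :=
    exists_cross_edge E I S (hreach s hsI t htI) hsS htS
  obtain ⟨k₀, v₀, hv0₀, hvl₀, hve₀, hvI₀⟩ := exists_path E I (hreach y hyI x hxI) hyI
  obtain ⟨k, v, hv0, hvl, hve, hvI, hinj⟩ :=
    path_dedup E I y x k₀ v₀ hv0₀ hvl₀ hve₀ hvI₀
  set C : Finset (Fin n) := Finset.image v Finset.univ with hC
  set σf : Fin n → Fin n := fun z =>
    if h : ∃ r, v r = z then v (Classical.choose h + 1) else z with hσf
  have hσ : ∀ r, σf (v r) = v (r + 1) := by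
    intro r
    have h : ∃ r', v r' = v r := ⟨r, rfl⟩
    rw [hσf]
    simp only [dif_pos h]
    congr 1
    have := Classical.choose_spec h
    have : Classical.choose h = r := hinj this
    rw [this]
  have hedge : ∀ r : Fin (k+1), E (v r) (v (r + 1)) := by
    intro r
    by_cases hr : r = Fin.last k
    · rw [hr, Fin.last_add_one, hv0, hvl]
      exact hExy
    · obtain ⟨s', hs'⟩ := Fin.exists_castSucc_eq.mpr hr
      have h1 : v (r + 1) = v s'.succ := by
        congr 1
        apply Fin.ext
        rw [Fin.val_add_one, if_neg hr, ← hs']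
        rfl
      rw [h1, ← hs']
      exact hve s'
  have hmemC : ∀ r, v r ∈ C := fun r => Finset.mem_image.mpr ⟨r, Finset.mem_univ _, rfl⟩
  refine ⟨C, σf, ?_, ⟨x, ?_, hxS⟩, ⟨y, ?_, hyS⟩, ?_, ?_, ?_, ?_⟩
  · intro z hz
    obtain ⟨r, -, rfl⟩ := Finset.mem_image.mp hz
    exact hvI r
  · rw [← hvl]; exact hmemC _
  · rw [← hv0]; exact hmemC _
  · intro z hz
    obtain ⟨r, -, rfl⟩ := Finset.mem_image.mp hz
    rw [hσ]
    exact hedge r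
  · intro z hz
    obtain ⟨r, -, rfl⟩ := Finset.mem_image.mp hz
    rw [hσ]
    exact hmemC _
  · rw [hC, Finset.sum_image (fun a _ b _ h => hinj h), Finset.sum_image (fun a _ b _ h => hinj h)]
    have h1 : ∀ r : Fin (k+1), Finsupp.single (σf (v r)) (1:ℕ) = Finsupp.single (v (r+1)) 1 := by
      intro r; rw [hσ]
    rw [Finset.sum_congr rfl (fun r _ => h1 r)]
    exact Fintype.sum_equiv (Equiv.addRight (1 : Fin (k+1)))
      (fun r => Finsupp.single (v (r + 1)) 1) (fun r => Finsupp.single (v r) 1)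
      (fun r => rfl)
  · intro D hDC hDne hDclosed
    obtain ⟨z₀, hz₀⟩ := hDne
    obtain ⟨r₀, -, rfl⟩ := Finset.mem_image.mp (hDC hz₀)
    have hclaim : ∀ s : ℕ, v (r₀ + (s : Fin (k+1))) ∈ D := by
      intro s
      induction s with
      | zero => simpa using hz₀
      | succ s ihs =>
          have hc : ((s + 1 : ℕ) : Fin (k+1)) = ((s : ℕ) : Fin (k+1)) + 1 := by
            push_cast
            ring
          rw [hc, ← add_assoc, ← hσ]
          exact hDclosed _ ihs
    apply Finset.Subset.antisymm hDC
    intro z hz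
    obtain ⟨r, -, rfl⟩ := Finset.mem_image.mp hz
    have := hclaim ((r - r₀) : Fin (k+1)).val
    rwa [Fin.cast_val_eq_self, add_sub_cancel] at this

/-- kill the X variables -/
def piA (n : ℕ) : MvPolynomial (Fin n ⊕ Fin n) ℤ →ₐ[ℤ] MvPolynomial (Fin n ⊕ Fin n) ℤ :=
  aeval (fun v => match v with
    | Sum.inl i => X (Sum.inl i)
    | Sum.inr _ => 0)

theorem piA_Ynum (E : Fin n → Fin n → Prop) (I : Finset (Fin n)) :
    piA n (Ynum E I) = ∏ i ∈ I, X (Sum.inl i) := by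
  rw [Ynum, map_sum]
  rw [Finset.sum_eq_single (fun x => x : Fin n → Fin n)]
  · rw [if_pos]
    · rw [map_prod]
      refine Finset.prod_congr rfl fun i _ => ?_
      rw [if_pos rfl, piA, aeval_X]
    · exact ⟨fun _ _ => rfl, fun _ _ => Or.inl rfl, fun _ _ _ _ _ _ => rfl⟩
  · intro f _ hne
    split_ifs with hc
    · have : ∃ i ∈ I, ¬ f i = i := by
        by_contra hcon
        push_neg at hcon
        refine hne (funext fun x => ?_)
        by_cases hx : x ∈ I
        · exact hcon x hx
        · exact hc.1 x hx
      obtain ⟨i₀, hi₀, hfi₀⟩ := this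
      rw [map_prod]
      refine Finset.prod_eq_zero hi₀ ?_
      rw [if_neg hfi₀, piA, aeval_X]
    · exact map_zero _
  · intro h; exact absurd (Finset.mem_univ _) h

theorem X_inl_prod_dvd_imp {I J : Finset (Fin n)}
    (h : (∏ i ∈ I, (X (Sum.inl i) : MvPolynomial (Fin n ⊕ Fin n) ℤ)) ∣
      ∏ j ∈ J, X (Sum.inl j)) (i₀ : Fin n) (hi₀ : i₀ ∈ I) : i₀ ∈ J := by
  by_contra hiJ
  obtain ⟨c, hc⟩ := (dvd_trans (Finset.dvd_prod_of_mem _ hi₀) h)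
  set ρ : MvPolynomial (Fin n ⊕ Fin n) ℤ →ₐ[ℤ] ℤ :=
    aeval (fun v : Fin n ⊕ Fin n => if v = Sum.inl i₀ then (0 : ℤ) else 1) with hρ
  have := congrArg ρ hc
  rw [map_prod, map_mul, hρ, aeval_X, if_pos rfl, zero_mul] at this
  have h1 : ∀ j ∈ J, ρ (X (Sum.inl j)) = 1 := by
    intro j hj
    rw [hρ, aeval_X, if_neg]
    intro hv
    exact hiJ (Sum.inl_injective hv ▸ hj)
  rw [Finset.prod_congr rfl h1, Finset.prod_const_one] at this
  exact one_ne_zero this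

theorem Ynum_ne_zero (E : Fin n → Fin n → Prop) (I : Finset (Fin n)) :
    Ynum E I ≠ 0 := by
  intro h
  have := sl_self E I
  rw [h, sl, map_zero, coeff_zero] at this
  exact one_ne_zero this.symm

theorem Ynum_not_unit (E : Fin n → Fin n → Prop) (I : Finset (Fin n)) (hI : I.Nonempty) :
    ¬ IsUnit (Ynum E I) := by
  intro h
  obtain ⟨i₀, hi₀⟩ := hI
  have h2 : IsUnit (piA n (Ynum E I)) := h.map (piA n)
  rw [piA_Ynum] at h2
  have h3 := X_inl_prod_dvd_imp (I := I) (J := ∅)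
    (by rw [Finset.prod_empty]; exact h2.dvd) i₀ hi₀
  exact absurd h3 (Finset.notMem_empty _)

theorem Ynum_irreducible_aux (E : Fin n → Fin n → Prop) (hE : ∀ i, ¬ E i i)
    (I : Finset (Fin n)) (hIne : I.Nonempty)
    (hreach : ∀ a ∈ I, ∀ b ∈ I, ReachIn E I a b) :
    Irreducible (Ynum E I) := by
  classical
  constructor
  · exact Ynum_not_unit E I hIne
  intro F G hFG
  by_contra hcon
  push_neg at hcon
  obtain ⟨hFnu, hGnu⟩ := hcon
  set N := Ynum E I with hN
  have hNne : N ≠ 0 := Ynum_ne_zero E I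
  have hFne : F ≠ 0 := fun h => hNne (by rw [hFG, h, zero_mul])
  have hGne : G ≠ 0 := fun h => hNne (by rw [hFG, h, mul_zero])
  have heFG : ee n N = ee n F * ee n G := by rw [hFG, map_mul]
  have heFne : ee n F ≠ 0 := fun h => hFne ((map_eq_zero_iff _ (ee n).injective).mp h)
  have heGne : ee n G ≠ 0 := fun h => hGne ((map_eq_zero_iff _ (ee n).injective).mp h)
  obtain ⟨dF₀, hdF₀⟩ := MvPolynomial.support_nonempty.mpr heFne
  obtain ⟨dG₀, hdG₀⟩ := MvPolynomial.support_nonempty.mpr heGne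
  -- multilinearity of N in the A-variables
  have hmul : ∀ d ∈ (ee n N).support, ∀ i : Fin n, d i ≤ 1 ∧ (d i ≠ 0 → i ∈ I) := by
    intro d hd i
    obtain ⟨U, hU, rfl⟩ := supp_ee_Ynum E I d hd
    rw [indF_apply]
    split_ifs with h
    · exact ⟨le_refl 1, fun _ => hU h⟩
    · exact ⟨Nat.zero_le 1, fun h0 => absurd rfl h0⟩
  -- variable supports land in I
  have hvarI : ∀ p : MvPolynomial (Fin n) (MvPolynomial (Fin n) ℤ),
      (∃ q, ee n N = p * q ∧ q ≠ 0) → ∀ d ∈ p.support, ∀ i, d i ≠ 0 → i ∈ I := by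
    rintro p ⟨q, hpq, hqne⟩ d hd i hdi
    obtain ⟨dq, hdq⟩ := MvPolynomial.support_nonempty.mpr hqne
    obtain ⟨d', hd', hle⟩ := exists_supp_mul hd hdq i
    rw [← hpq] at hd'
    exact (hmul d' hd' i).2 (by omega)
  set S : Finset (Fin n) := I.filter (fun i => ∃ d ∈ (ee n F).support, d i ≠ 0) with hSdef
  set T : Finset (Fin n) := I.filter (fun i => ∃ d ∈ (ee n G).support, d i ≠ 0) with hTdef
  have hSI : S ⊆ I := Finset.filter_subset _ _
  have hTI : T ⊆ I := Finset.filter_subset _ _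
  have hST : ∀ i, ¬(i ∈ S ∧ i ∈ T) := by
    rintro i ⟨hiS, hiT⟩
    obtain ⟨dF, hdF, hdFi⟩ := (Finset.mem_filter.mp hiS).2
    obtain ⟨dG, hdG, hdGi⟩ := (Finset.mem_filter.mp hiT).2
    obtain ⟨d, hd, hle⟩ := exists_supp_mul hdF hdG i
    rw [← heFG] at hd
    have := (hmul d hd i).1
    omega
  have hvarF : ∀ d ∈ (ee n F).support, ∀ i, d i ≠ 0 → i ∈ S := by
    intro d hd i hdi
    rw [hSdef, Finset.mem_filter]
    exact ⟨hvarI (ee n F) ⟨ee n G, heFG, heGne⟩ d hd i hdi, ⟨d, hd, hdi⟩⟩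
  have hvarG : ∀ d ∈ (ee n G).support, ∀ i, d i ≠ 0 → i ∈ T := by
    intro d hd i hdi
    rw [hTdef, Finset.mem_filter]
    refine ⟨hvarI (ee n G) ⟨ee n F, by rw [heFG, mul_comm], heFne⟩ d hd i hdi, ⟨d, hd, hdi⟩⟩
  -- S and T cover I
  have hanc : coeff (indF I) (ee n F * ee n G) = 1 := by
    rw [← heFG]
    exact sl_self E I
  have hcover : I ⊆ S ∪ T := by
    intro i hi
    have h1 : coeff (indF I) (ee n F * ee n G) ≠ 0 := by rw [hanc]; exact one_ne_zero
    rw [coeff_mul] at h1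
    obtain ⟨⟨d₁, d₂⟩, hmem, hne⟩ := Finset.exists_ne_zero_of_sum_ne_zero h1
    rw [Finset.HasAntidiagonal.mem_antidiagonal] at hmem
    have hsum : d₁ i + d₂ i = 1 := by
      have := congrFun (congrArg (fun d : Fin n →₀ ℕ => (d : Fin n → ℕ)) hmem) i
      simp only [Finsupp.coe_add, Pi.add_apply] at this
      rw [this, indF_apply, if_pos hi]
    have hc1 : coeff d₁ (ee n F) ≠ 0 := fun h => hne (by simp [h])
    have hc2 : coeff d₂ (ee n G) ≠ 0 := fun h => hne (by simp [h])
    rcases Nat.eq_zero_or_pos (d₁ i) with h | h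
    · have : d₂ i ≠ 0 := by omega
      exact Finset.mem_union_right _
        (hvarG d₂ (MvPolynomial.mem_support_iff.mpr hc2) i this)
    · exact Finset.mem_union_left _
        (hvarF d₁ (MvPolynomial.mem_support_iff.mpr hc1) i (by omega))
  -- neither S nor T is empty, else the corresponding factor is a unit
  have hunit : ∀ (P Q : MvPolynomial (Fin n) (MvPolynomial (Fin n) ℤ)),
      ee n N = P * Q → Q ≠ 0 → (∀ d ∈ Q.support, ∀ i, d i ≠ 0 → False) →
      IsUnit Q := by
    intro P Q hPQ hQne hQsup
    have hsupp : Q.support ⊆ {0} := by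
      intro d hd
      rw [Finset.mem_singleton]
      ext i
      by_contra hdi
      exact hQsup d hd i (by simpa using hdi)
    have hQC : Q = C (coeff 0 Q) := by
      conv_lhs => rw [MvPolynomial.as_sum Q]
      rcases Finset.subset_singleton_iff.mp hsupp with h | h
      · exact absurd ((MvPolynomial.support_eq_empty).mp h) hQne
      · rw [h, Finset.sum_singleton, monomial_zero']
    have h1 : coeff (indF I) (ee n N) = 1 := sl_self E I
    rw [hPQ, hQC, mul_comm, coeff_C_mul] at h1
    have : IsUnit (coeff 0 Q) := IsUnit.of_mul_eq_one _ h1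
    rw [hQC]
    exact this.map (C : MvPolynomial (Fin n) ℤ →+* _)
  have hSne : S.Nonempty := by
    rw [Finset.nonempty_iff_ne_empty]
    intro hS0
    refine hFnu ?_
    have hF : IsUnit (ee n F) := by
      refine hunit (ee n G) (ee n F) (by rw [heFG, mul_comm]) heFne ?_
      intro d hd i hdi
      have := hvarF d hd i hdi
      rw [hS0] at this
      exact Finset.notMem_empty _ this
    have := hF.map (ee n).symm.toRingEquiv
    rwa [show (ee n).symm.toRingEquiv (ee n F) = F from (ee n).symm_apply_apply F] at this
  have hTne : T.Nonempty := by
    rw [Finset.nonempty_iff_ne_empty]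
    intro hT0
    refine hGnu ?_
    have hG : IsUnit (ee n G) := by
      refine hunit (ee n F) (ee n G) heFG heGne ?_
      intro d hd i hdi
      have := hvarG d hd i hdi
      rw [hT0] at this
      exact Finset.notMem_empty _ this
    have := hG.map (ee n).symm.toRingEquiv
    rwa [show (ee n).symm.toRingEquiv (ee n G) = G from (ee n).symm_apply_apply G] at this
  -- the splitting identity
  have hsplit : ∀ U, U ⊆ I → sl U N =
      coeff (indF (U ∩ S)) (ee n F) * coeff (indF (U ∩ T)) (ee n G) := by
    intro U hU
    rw [sl, heFG]
    exact coeff_indF_mul (ee n F) (ee n G) S T U hvarF hvarG hST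
      (fun i hi => hcover (hU hi))
  have hanchor : coeff (indF S) (ee n F) * coeff (indF T) (ee n G) = 1 := by
    have := hsplit I (le_refl _)
    rw [sl_self] at this
    rw [Finset.inter_eq_right.mpr hSI, Finset.inter_eq_right.mpr hTI] at this
    exact this.symm
  -- the key multiplicative identity for slices
  have hstar : ∀ W, W ⊆ I → sl (I \ W) N =
      sl (I \ (W ∩ S)) N * sl (I \ (W ∩ T)) N := by
    intro W hW
    have e1 : (I \ W) ∩ S = S \ W := by
      ext i
      simp only [Finset.mem_inter, Finset.mem_sdiff]
      exact ⟨fun ⟨⟨_, h2⟩, h3⟩ => ⟨h3, h2⟩, fun ⟨h1, h2⟩ => ⟨⟨hSI h1, h2⟩, h1⟩⟩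
    have e2 : (I \ W) ∩ T = T \ W := by
      ext i
      simp only [Finset.mem_inter, Finset.mem_sdiff]
      exact ⟨fun ⟨⟨_, h2⟩, h3⟩ => ⟨h3, h2⟩, fun ⟨h1, h2⟩ => ⟨⟨hTI h1, h2⟩, h1⟩⟩
    have e3 : (I \ (W ∩ S)) ∩ S = S \ W := by
      ext i
      simp only [Finset.mem_inter, Finset.mem_sdiff]
      constructor
      · rintro ⟨⟨h1, h2⟩, h3⟩
        exact ⟨h3, fun hw => h2 ⟨hw, h3⟩⟩
      · rintro ⟨h1, h2⟩
        exact ⟨⟨hSI h1, fun hw => h2 hw.1⟩, h1⟩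
    have e4 : (I \ (W ∩ S)) ∩ T = T := by
      apply Finset.inter_eq_right.mpr
      intro i hi
      rw [Finset.mem_sdiff]
      exact ⟨hTI hi, fun hw => hST i ⟨(Finset.mem_inter.mp hw).2, hi⟩⟩
    have e5 : (I \ (W ∩ T)) ∩ S = S := by
      apply Finset.inter_eq_right.mpr
      intro i hi
      rw [Finset.mem_sdiff]
      exact ⟨hSI hi, fun hw => hST i ⟨hi, (Finset.mem_inter.mp hw).2⟩⟩
    have e6 : (I \ (W ∩ T)) ∩ T = T \ W := by
      ext i
      simp only [Finset.mem_inter, Finset.mem_sdiff]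
      constructor
      · rintro ⟨⟨h1, h2⟩, h3⟩
        exact ⟨h3, fun hw => h2 ⟨hw, h3⟩⟩
      · rintro ⟨h1, h2⟩
        exact ⟨⟨hTI h1, fun hw => h2 hw.1⟩, h1⟩
    rw [hsplit (I \ W) (Finset.sdiff_subset),
      hsplit (I \ (W ∩ S)) (Finset.sdiff_subset),
      hsplit (I \ (W ∩ T)) (Finset.sdiff_subset), e1, e2, e3, e4, e5, e6]
    calc coeff (indF (S \ W)) (ee n F) * coeff (indF (T \ W)) (ee n G)
        = (coeff (indF (S \ W)) (ee n F) * coeff (indF (T \ W)) (ee n G)) * 1 := by ring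
      _ = _ := by rw [← hanchor]; ring
  -- get the cycle
  obtain ⟨sS, hsS⟩ := hSne
  obtain ⟨tT, htT⟩ := hTne
  obtain ⟨C, σf, hCI, ⟨cx, hcxC, hcxS⟩, ⟨cy, hcyC, hcyS⟩, hedge, hclose, hcsum, hmin⟩ :=
    exists_cycle E I S hreach ⟨sS, hSI hsS, hsS⟩
      ⟨tT, hTI htT, fun h => hST tT ⟨h, htT⟩⟩
  -- C ∩ S and C ∩ T split C
  have hCsplit : (C ∩ S) ∪ (C ∩ T) = C := by
    ext z
    simp only [Finset.mem_union, Finset.mem_inter]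
    constructor
    · rintro (⟨h, _⟩ | ⟨h, _⟩) <;> exact h
    · intro hz
      rcases Finset.mem_union.mp (hcover (hCI hz)) with h | h
      · exact Or.inl ⟨hz, h⟩
      · exact Or.inr ⟨hz, h⟩
  have hCdisj : Disjoint (C ∩ S) (C ∩ T) := by
    rw [Finset.disjoint_left]
    intro z hz1 hz2
    exact hST z ⟨(Finset.mem_inter.mp hz1).2, (Finset.mem_inter.mp hz2).2⟩
  -- the contradiction at the cycle monomial
  set μ : Fin n →₀ ℕ := ∑ x ∈ C, Finsupp.single x 1 with hμ
  set m₁ : Fin n →₀ ℕ := ∑ x ∈ C ∩ S, Finsupp.single (σf x) 1 with hm₁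
  set m₂ : Fin n →₀ ℕ := ∑ x ∈ C ∩ T, Finsupp.single (σf x) 1 with hm₂
  have hm12 : m₁ + m₂ = μ := by
    rw [hm₁, hm₂, hμ, ← Finset.sum_union hCdisj, hCsplit]
    exact hcsum
  have hzero : coeff μ (sl (I \ C) N) = 0 := no_perm E I C hCI ⟨cx, hcxC⟩
  have hpos1 : 1 ≤ coeff m₁ (sl (I \ (C ∩ S)) N) :=
    coeff_restrict_pos E hE I C (C ∩ S) σf hCI (Finset.inter_subset_left)
      hedge hclose hmin ⟨cy, hcyC, fun h => hcyS (Finset.mem_inter.mp h).2⟩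
  have hpos2 : 1 ≤ coeff m₂ (sl (I \ (C ∩ T)) N) :=
    coeff_restrict_pos E hE I C (C ∩ T) σf hCI (Finset.inter_subset_left)
      hedge hclose hmin ⟨cx, hcxC, fun h => hST cx ⟨hcxS, (Finset.mem_inter.mp h).2⟩⟩
  have hfinal : (1 : ℤ) ≤ coeff μ (sl (I \ (C ∩ S)) N * sl (I \ (C ∩ T)) N) := by
    rw [coeff_mul]
    have hmem : (m₁, m₂) ∈ Finset.HasAntidiagonal.antidiagonal μ := Finset.HasAntidiagonal.mem_antidiagonal.mpr hm12
    calc (1 : ℤ) = 1 * 1 := by ring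
      _ ≤ coeff m₁ (sl (I \ (C ∩ S)) N) * coeff m₂ (sl (I \ (C ∩ T)) N) := by
          exact mul_le_mul hpos1 hpos2 (by norm_num) (le_trans zero_le_one hpos1)
      _ ≤ _ := by
          refine Finset.single_le_sum (f := fun p : (Fin n →₀ ℕ) × (Fin n →₀ ℕ) =>
            coeff p.1 (sl (I \ (C ∩ S)) N) * coeff p.2 (sl (I \ (C ∩ T)) N))
            (fun p _ => ?_) hmem
          exact mul_nonneg (coeff_sl_Ynum_nonneg E I _ p.1) (coeff_sl_Ynum_nonneg E I _ p.2)
  have := hstar C hCI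
  rw [show C ∩ S = C ∩ S from rfl] at this
  have hcontr : coeff μ (sl (I \ C) N) =
      coeff μ (sl (I \ (C ∩ S)) N * sl (I \ (C ∩ T)) N) := by rw [this]
  rw [hzero] at hcontr
  omega

theorem Ynum_dvd_subset (E : Fin n → Fin n → Prop) (I J : Finset (Fin n))
    (h : Ynum E I ∣ Ynum E J) : I ⊆ J := by
  have h2 : (∏ i ∈ I, (X (Sum.inl i) : MvPolynomial (Fin n ⊕ Fin n) ℤ)) ∣
      ∏ j ∈ J, X (Sum.inl j) := by
    rw [← piA_Ynum E I, ← piA_Ynum E J]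
    exact map_dvd (piA n) h
  exact fun i hi => X_inl_prod_dvd_imp h2 i hi

theorem Ynum_coprime_aux (E : Fin n → Fin n → Prop) (I J : Finset (Fin n))
    (hI : Irreducible (Ynum E I)) (hJ : Irreducible (Ynum E J)) (hne : I ≠ J)
    (d : MvPolynomial (Fin n ⊕ Fin n) ℤ) (hdI : d ∣ Ynum E I) (hdJ : d ∣ Ynum E J) :
    IsUnit d := by
  by_contra hdu
  have hId : Ynum E I ∣ d := by
    obtain ⟨c, hc⟩ := hdI
    rcases hI.isUnit_or_isUnit hc with h | h
    · exact absurd h hdu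
    · obtain ⟨u, rfl⟩ := h
      exact ⟨↑u⁻¹, by rw [hc, mul_assoc, Units.mul_inv, mul_one]⟩
  have hJd : Ynum E J ∣ d := by
    obtain ⟨c, hc⟩ := hdJ
    rcases hJ.isUnit_or_isUnit hc with h | h
    · exact absurd h hdu
    · obtain ⟨u, rfl⟩ := h
      exact ⟨↑u⁻¹, by rw [hc, mul_assoc, Units.mul_inv, mul_one]⟩
  have h1 : I ⊆ J := Ynum_dvd_subset E I J (dvd_trans hId hdJ)
  have h2 : J ⊆ I := Ynum_dvd_subset E J I (dvd_trans hJd hdI)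
  exact hne (Finset.Subset.antisymm h1 h2)

end Aux


/-- For `I` strongly connected the numerator `N_I` of `Y_I` is irreducible in
`ℤ[A_1,…,A_n,X_1,…,X_n]`, and numerators of distinct strongly connected subsets have no
common non-unit factor. -/
theorem stmt7 (n : ℕ) (E : Fin n → Fin n → Prop) (hE : ∀ i, ¬ E i i) :
    (∀ I : Finset (Fin n), StronglyConnected E I → Irreducible (Ynum E I)) ∧
    (∀ I J : Finset (Fin n), StronglyConnected E I → StronglyConnected E J → I ≠ J →
      ∀ d : MvPolynomial (Fin n ⊕ Fin n) ℤ, d ∣ Ynum E I → d ∣ Ynum E J → IsUnit d) := by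
  constructor
  · intro I hSC
    have hSC' : I.Nonempty ∧ ∀ a ∈ I, ∀ b ∈ I, ReachIn E I a b := hSC
    exact Ynum_irreducible_aux E hE I hSC'.1 hSC'.2
  · intro I J hI hJ hne d hdI hdJ
    have hI' : I.Nonempty ∧ ∀ a ∈ I, ∀ b ∈ I, ReachIn E I a b := hI
    have hJ' : J.Nonempty ∧ ∀ a ∈ J, ∀ b ∈ J, ReachIn E J a b := hJ
    exact Ynum_coprime_aux E I J (Ynum_irreducible_aux E hE I hI'.1 hI'.2)
      (Ynum_irreducible_aux E hE J hJ'.1 hJ'.2) hne d hdI hdJ
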